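/- Let L be a finite-dimensional nilpotent stem Lie algebra over a field k of breadth type (0,1). Then L is isomorphic to the Heisenberg Lie algebra H_m for some m ≥ 1. -/

import Mathlib

/- Common definitions: breadth, breadth type, derived subalgebra, Camina Lie algebras,
nilpotency class, minimal generation, and free nilpotent Lie algebras. -/

open Module

section Defs

variable (k : Type*) [Field k]

/-- The breadth of an element `x` of a Lie algebra: the rank of the adjoint map `ad x`
(equivalently, the codimension of the centralizer of `x`). -/
noncomputable def breadth (L : Type*) [LieRing L] [LieAlgebra k L] (x : L) : ℕ :=
  Module.finrank k (LinearMap.range (LieAlgebra.ad k L x))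

/-- A Lie algebra has breadth type `S` if `S` is exactly the set of breadths of its elements. -/
def HasBreadthType (L : Type*) [LieRing L] [LieAlgebra k L] (S : Set ℕ) : Prop :=
  Set.range (breadth k L) = S

/-- The derived subalgebra `L' = [L, L]` as a Lie ideal. -/
abbrev derivedIdeal (L : Type*) [LieRing L] [LieAlgebra k L] : LieIdeal k L :=
  ⁅(⊤ : LieIdeal k L), (⊤ : LieIdeal k L)⁆

lemma lie_mem_derivedIdeal (L : Type*) [LieRing L] [LieAlgebra k L] (x y : L) :
    ⁅x, y⁆ ∈ derivedIdeal k L :=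
  LieSubmodule.lie_mem_lie (LieSubmodule.mem_top x) (LieSubmodule.mem_top y)

/-- A Camina Lie algebra: `[x, L] = L'` for every `x ∈ L \ L'`. -/
def IsCamina (L : Type*) [LieRing L] [LieAlgebra k L] : Prop :=
  ∀ x : L, x ∉ derivedIdeal k L →
    LinearMap.range (LieAlgebra.ad k L x) = (derivedIdeal k L).toSubmodule

/-- A Lie algebra is nilpotent of class exactly `c`. -/
def IsNilpotentOfClass (L : Type*) [LieRing L] [LieAlgebra k L] (c : ℕ) : Prop :=
  LieModule.lowerCentralSeries k L L c = ⊥ ∧ ∀ b < c, LieModule.lowerCentralSeries k L L b ≠ ⊥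

/-- A Lie algebra is minimally generated by `n` elements: some `n` elements generate it
and no fewer elements generate it. -/
def MinimallyGenerated (L : Type*) [LieRing L] [LieAlgebra k L] (n : ℕ) : Prop :=
  (∃ s : Finset L, s.card = n ∧ LieSubalgebra.lieSpan k L ↑s = ⊤) ∧
  ∀ s : Finset L, LieSubalgebra.lieSpan k L ↑s = ⊤ → n ≤ s.card

/-- The free `c`-step nilpotent Lie algebra on `n` generators: the quotient of the free
Lie algebra on `n` generators by the `(c+1)`-st term `γ_{c+1}` of its lower central series. -/
abbrev FreeNilp (c n : ℕ) :=
  FreeLieAlgebra k (Fin n) ⧸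
    LieModule.lowerCentralSeries k (FreeLieAlgebra k (Fin n)) (FreeLieAlgebra k (Fin n)) c

/-- The canonical generators of the free `c`-step nilpotent Lie algebra on `n` generators. -/
noncomputable def gen (c n : ℕ) (i : Fin n) : FreeNilp k c n :=
  LieSubmodule.Quotient.mk
    (N := LieModule.lowerCentralSeries k (FreeLieAlgebra k (Fin n)) (FreeLieAlgebra k (Fin n)) c)
    (FreeLieAlgebra.of k i)

end Defs

/-- a finite-dimensional nilpotent stem Lie algebra of breadth type `(0,1)` is
isomorphic to a Heisenberg Lie algebra `H_m`, i.e. it admits a basis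
`{x_1, y_1, …, x_m, y_m, z}` with `[x_i, y_j] = δ_{ij} z` and `z` central (all other brackets
of basis elements zero). -/
lemma symp_aux (k : Type*) [Field k] :
    ∀ (n : ℕ) (V : Type*) [AddCommGroup V] [Module k V] [FiniteDimensional k V],
      finrank k V = n →
      ∀ (B : V →ₗ[k] V →ₗ[k] k), (∀ v, B v v = 0) →
      ∀ z : V, z ≠ 0 →
      (∀ v : V, (∀ w, B v w = 0) ↔ v ∈ Submodule.span k {z}) →
      ∃ (m : ℕ) (b : Basis (Fin m ⊕ Fin m ⊕ Unit) k V),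
        b (Sum.inr (Sum.inr ())) = z ∧
        (∀ i j, B (b (Sum.inl i)) (b (Sum.inr (Sum.inl j))) = if i = j then 1 else 0) ∧
        (∀ i j, B (b (Sum.inl i)) (b (Sum.inl j)) = 0) ∧
        (∀ i j, B (b (Sum.inr (Sum.inl i))) (b (Sum.inr (Sum.inl j))) = 0) := by
  intro n
  induction n using Nat.strong_induction_on with
  | _ n ih =>
  intro V _ _ _ hn B halt z hz hrad
  have hskew : ∀ a b : V, B a b = - B b a := by
    intro a b
    have h := halt (a + b)
    simp only [map_add, LinearMap.add_apply, halt] at h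
    linear_combination h
  have hBz : ∀ a : V, B z a = 0 :=
    (hrad z).mpr (Submodule.mem_span_singleton_self z)
  by_cases hV : ∀ v : V, v ∈ Submodule.span k {z}
  · -- V = span z, take m = 0
    have hind : LinearIndependent k (fun _ : Unit => z) := linearIndependent_unique_iff.mpr hz
    have hspan : ⊤ ≤ Submodule.span k (Set.range fun _ : Unit => z) := by
      intro v _
      have := hV v
      simpa using this
    let b0 : Basis Unit k V := Basis.mk hind hspan
    let e : Unit ≃ (Fin 0 ⊕ Fin 0 ⊕ Unit) :=
      ⟨fun _ => Sum.inr (Sum.inr ()), fun _ => (), fun _ => rfl, by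
        rintro (i | i | u)
        · exact i.elim0
        · exact i.elim0
        · rfl⟩
    refine ⟨0, b0.reindex e, ?_, fun i => i.elim0, fun i => i.elim0, fun i => i.elim0⟩
    simp [b0, Basis.reindex_apply, Basis.mk_apply]
  · push_neg at hV
    obtain ⟨v₀, hv₀⟩ := hV
    have hBv : ∃ w, B v₀ w ≠ 0 := by
      by_contra h
      push_neg at h
      exact hv₀ ((hrad v₀).mp h)
    obtain ⟨w, hw⟩ := hBv
    set v : V := (B v₀ w)⁻¹ • v₀ with hv
    have hvw : B v w = 1 := by
      simp [hv, map_smul, smul_eq_mul, inv_mul_cancel₀ hw]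
    have hwv : B w v = -1 := by rw [hskew, hvw]
    have hvv : B v v = 0 := halt v
    have hww : B w w = 0 := halt w
    set U : Submodule k V := LinearMap.ker (B v) ⊓ LinearMap.ker (B w) with hU
    have hmemU : ∀ x : V, x ∈ U ↔ B v x = 0 ∧ B w x = 0 := by
      intro x
      simp [hU, Submodule.mem_inf, LinearMap.mem_ker]
    have hzU : z ∈ U := by
      rw [hmemU]
      constructor
      · rw [hskew, hBz, neg_zero]
      · rw [hskew, hBz, neg_zero]
    -- the projection onto U
    set p : V → V := fun a => a - (B v a) • w + (B w a) • v with hp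
    have hpU : ∀ a, p a ∈ U := by
      intro a
      rw [hmemU]
      constructor
      · simp [hp, map_sub, map_add, map_smul, smul_eq_mul, hvw, hvv]
      · simp [hp, map_sub, map_add, map_smul, smul_eq_mul, hww, hwv]
    have hdecomp : ∀ a : V, a = p a + (B v a) • w - (B w a) • v := by
      intro a
      simp [hp]
      abel
    set B' : U →ₗ[k] U →ₗ[k] k := (B.domRestrict U).compl₂ U.subtype with hB'
    have hB'app : ∀ x y : U, B' x y = B (x : V) (y : V) := fun x y => rfl
    have halt' : ∀ u : U, B' u u = 0 := fun u => halt _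
    set z' : U := ⟨z, hzU⟩ with hz'def
    have hz' : z' ≠ 0 := fun h => hz (congrArg Subtype.val h)
    have hrad' : ∀ u : U, (∀ u', B' u u' = 0) ↔ u ∈ Submodule.span k {z'} := by
      intro u
      constructor
      · intro h
        have hu : ∀ a : V, B (u : V) a = 0 := by
          intro a
          have h1 : B (u : V) (p a) = 0 := h ⟨p a, hpU a⟩
          have h2 : B (u : V) w = 0 := by
            rw [hskew]
            simpa using ((hmemU u).mp u.2).2
          have h3 : B (u : V) v = 0 := by
            rw [hskew]
            simpa using ((hmemU u).mp u.2).1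
          calc B (u : V) a = B (u : V) (p a + (B v a) • w - (B w a) • v) := by
                rw [← hdecomp]
            _ = 0 := by
                simp [map_add, map_sub, map_smul, smul_eq_mul, h1, h2, h3]
        have := (hrad (u : V)).mp hu
        rw [Submodule.mem_span_singleton] at this ⊢
        obtain ⟨c, hc⟩ := this
        exact ⟨c, Subtype.ext (by simpa [hz'def] using hc)⟩
      · intro h u'
        rw [Submodule.mem_span_singleton] at h
        obtain ⟨c, hc⟩ := h
        have : (u : V) = c • z := by
          rw [← hc]; rfl
        rw [hB'app, this, map_smul]
        simp [hBz]
    have hUlt : finrank k U < n := by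
      rw [← hn]
      apply Submodule.finrank_lt
      intro htop
      have : v ∈ U := htop ▸ Submodule.mem_top
      have := ((hmemU v).mp this).2
      rw [hwv] at this
      exact one_ne_zero (neg_eq_zero.mp this)
    obtain ⟨m, b', hb'z, hg1', hg2', hg3'⟩ :=
      ih (finrank k U) hUlt U rfl B' halt' z' hz' hrad'
    -- build the new family
    set g : (Fin (m + 1) ⊕ Fin (m + 1) ⊕ Unit) → V := fun t =>
      match t with
      | Sum.inl i => Fin.cases v (fun i' => (b' (Sum.inl i') : V)) i
      | Sum.inr (Sum.inl j) => Fin.cases w (fun j' => (b' (Sum.inr (Sum.inl j')) : V)) j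
      | Sum.inr (Sum.inr _) => z
      with hg
    have hgl0 : g (Sum.inl 0) = v := rfl
    have hgls : ∀ i : Fin m, g (Sum.inl i.succ) = (b' (Sum.inl i) : V) := fun i => by
      simp [hg]
    have hgr0 : g (Sum.inr (Sum.inl 0)) = w := rfl
    have hgrs : ∀ j : Fin m, g (Sum.inr (Sum.inl j.succ)) = (b' (Sum.inr (Sum.inl j)) : V) :=
      fun j => by simp [hg]
    have hgz : g (Sum.inr (Sum.inr ())) = z := rfl
    -- values of B against elements of U
    have hvU : ∀ u : U, B v (u : V) = 0 := fun u => ((hmemU u).mp u.2).1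
    have hwU : ∀ u : U, B w (u : V) = 0 := fun u => ((hmemU u).mp u.2).2
    have hUv : ∀ u : U, B (u : V) v = 0 := fun u => by rw [hskew, hvU, neg_zero]
    have hUw : ∀ u : U, B (u : V) w = 0 := fun u => by rw [hskew, hwU, neg_zero]
    have key1 : ∀ i j, B (g (Sum.inl i)) (g (Sum.inr (Sum.inl j))) = if i = j then 1 else 0 := by
      intro i j
      induction i using Fin.cases with
      | zero =>
        induction j using Fin.cases with
        | zero => rw [hgl0, hgr0]; simpa using hvw
        | succ j => rw [hgl0, hgrs, hvU]; simp [(Fin.succ_ne_zero j).symm]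
      | succ i =>
        induction j using Fin.cases with
        | zero => rw [hgls, hgr0, hUw]; simp [Fin.succ_ne_zero i]
        | succ j =>
          rw [hgls, hgrs, ← hB'app, hg1' i j]
          simp [Fin.succ_inj]
    have key2 : ∀ i j, B (g (Sum.inl i)) (g (Sum.inl j)) = 0 := by
      intro i j
      induction i using Fin.cases with
      | zero =>
        induction j using Fin.cases with
        | zero => exact hvv
        | succ j => rw [hgl0, hgls]; exact hvU _
      | succ i =>
        induction j using Fin.cases with
        | zero => rw [hgls, hgl0]; exact hUv _
        | succ j => rw [hgls, hgls, ← hB'app, hg2' i j]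
    have key3 : ∀ i j,
        B (g (Sum.inr (Sum.inl i))) (g (Sum.inr (Sum.inl j))) = 0 := by
      intro i j
      induction i using Fin.cases with
      | zero =>
        induction j using Fin.cases with
        | zero => exact hww
        | succ j => rw [hgr0, hgrs]; exact hwU _
      | succ i =>
        induction j using Fin.cases with
        | zero => rw [hgrs, hgr0]; exact hUw _
        | succ j => rw [hgrs, hgrs, ← hB'app, hg3' i j]
    have keyz1 : ∀ t, B (g t) z = 0 := fun t => by rw [hskew, hBz, neg_zero]
    have keyz2 : ∀ t, B z (g t) = 0 := fun t => hBz _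
    -- linear independence
    have hind : LinearIndependent k g := by
      rw [Fintype.linearIndependent_iff]
      intro c hc
      have hcl : ∀ j : Fin (m + 1), c (Sum.inl j) = 0 := by
        intro j
        have h0 : ∑ t, c t • B (g (Sum.inr (Sum.inl j))) (g t) = 0 := by
          have := congrArg (fun x => B (g (Sum.inr (Sum.inl j))) x) hc
          simpa [map_sum, map_smul] using this
        rw [Finset.sum_eq_single (Sum.inl j)] at h0
        · rw [hskew, key1] at h0
          simpa using h0
        · rintro (i | j' | u) _ ht
          · rw [hskew, key1]
            have : ¬ (i = j) := fun h => ht (by rw [h])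
            simp [this]
          · rw [key3]; simp
          · cases u
            rw [hgz, keyz1 (Sum.inr (Sum.inl j))]
            simp
        · intro h
          exact absurd (Finset.mem_univ _) h
      have hcr : ∀ i : Fin (m + 1), c (Sum.inr (Sum.inl i)) = 0 := by
        intro i
        have h0 : ∑ t, c t • B (g (Sum.inl i)) (g t) = 0 := by
          have := congrArg (fun x => B (g (Sum.inl i)) x) hc
          simpa [map_sum, map_smul] using this
        rw [Finset.sum_eq_single (Sum.inr (Sum.inl i))] at h0
        · rw [key1] at h0
          simpa using h0
        · rintro (i' | j' | u) _ ht
          · rw [key2]; simp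
          · rw [key1]
            have : ¬ (i = j') := fun h => ht (by rw [h])
            simp [this]
          · cases u
            rw [hgz, keyz1 (Sum.inl i)]
            simp
        · intro h
          exact absurd (Finset.mem_univ _) h
      have hcz : c (Sum.inr (Sum.inr ())) = 0 := by
        have : (∑ t, c t • g t) = c (Sum.inr (Sum.inr ())) • z := by
          rw [Fintype.sum_sum_type, Fintype.sum_sum_type]
          simp [hcl, hcr, hgz]
        rw [hc] at this
        have := (smul_eq_zero.mp this.symm).resolve_right hz
        exact this
      rintro (i | j | u)
      · exact hcl i
      · exact hcr j
      · cases u; exact hcz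
    -- spanning
    have hUspan : ∀ x : U, (x : V) ∈ Submodule.span k (Set.range g) := by
      intro x
      have hx : (x : V) ∈ Submodule.map U.subtype (Submodule.span k (Set.range ⇑b')) := by
        rw [b'.span_eq]
        exact ⟨x, Submodule.mem_top, rfl⟩
      rw [Submodule.map_span] at hx
      refine Submodule.span_mono ?_ hx
      rintro _ ⟨_, ⟨t, rfl⟩, rfl⟩
      rcases t with i | j | u
      · exact ⟨Sum.inl i.succ, (hgls i).symm ▸ rfl⟩
      · exact ⟨Sum.inr (Sum.inl j.succ), (hgrs j).symm ▸ rfl⟩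
      · refine ⟨Sum.inr (Sum.inr ()), ?_⟩
        cases u
        rw [hgz, hb'z]
        rfl
    have hspan : ⊤ ≤ Submodule.span k (Set.range g) := by
      intro a _
      have h1 : p a ∈ Submodule.span k (Set.range g) := hUspan ⟨p a, hpU a⟩
      have h2 : w ∈ Submodule.span k (Set.range g) :=
        Submodule.subset_span ⟨Sum.inr (Sum.inl 0), rfl⟩
      have h3 : v ∈ Submodule.span k (Set.range g) :=
        Submodule.subset_span ⟨Sum.inl 0, rfl⟩
      rw [hdecomp a]
      exact sub_mem (add_mem h1 (Submodule.smul_mem _ _ h2)) (Submodule.smul_mem _ _ h3)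
    let b : Basis (Fin (m + 1) ⊕ Fin (m + 1) ⊕ Unit) k V := Basis.mk hind hspan
    have hb : ∀ t, b t = g t := fun t => Basis.mk_apply hind hspan t
    refine ⟨m + 1, b, ?_, ?_, ?_, ?_⟩
    · rw [hb]
    · intro i j; rw [hb, hb]; exact key1 i j
    · intro i j; rw [hb, hb]; exact key2 i j
    · intro i j; rw [hb, hb]; exact key3 i j

theorem breadth_type_zero_one_heisenberg
    (k : Type*) [Field k] (L : Type*) [LieRing L] [LieAlgebra k L]
    [FiniteDimensional k L] [LieRing.IsNilpotent L]
    (hstem : LieAlgebra.center k L ≤ derivedIdeal k L)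
    (hbt : HasBreadthType k L {0, 1}) :
    ∃ m : ℕ, 1 ≤ m ∧ ∃ b : Basis (Fin m ⊕ Fin m ⊕ Unit) k L,
      (∀ i j : Fin m, ⁅b (Sum.inl i), b (Sum.inr (Sum.inl j))⁆ =
        if i = j then b (Sum.inr (Sum.inr ())) else 0) ∧
      (∀ i j : Fin m, ⁅b (Sum.inl i), b (Sum.inl j)⁆ = 0) ∧
      (∀ i j : Fin m, ⁅b (Sum.inr (Sum.inl i)), b (Sum.inr (Sum.inl j))⁆ = 0) ∧
      (∀ v : L, ⁅b (Sum.inr (Sum.inr ())), v⁆ = 0) := by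
  classical
  have hble : ∀ x : L, finrank k (LinearMap.range (LieAlgebra.ad k L x)) ≤ 1 := by
    intro x
    have hx : breadth k L x ∈ ({0, 1} : Set ℕ) := by
      rw [← hbt]; exact Set.mem_range_self x
    have : breadth k L x = 0 ∨ breadth k L x = 1 := by simpa using hx
    unfold breadth at this
    omega
  have h1 : ∃ x : L, breadth k L x = 1 := by
    have : (1 : ℕ) ∈ Set.range (breadth k L) := by rw [hbt]; simp
    exact this
  obtain ⟨x₀, hx₀⟩ := h1
  have hadx₀ : ∃ y : L, ⁅x₀, y⁆ ≠ 0 := by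
    by_contra h
    push_neg at h
    have hr : LieAlgebra.ad k L x₀ = 0 := by
      ext y
      simp [LieAlgebra.ad_apply, h y]
    unfold breadth at hx₀
    rw [hr, LinearMap.range_zero] at hx₀
    rw [finrank_bot] at hx₀
    exact one_ne_zero hx₀.symm
  obtain ⟨y₀, hy₀⟩ := hadx₀
  set z : L := ⁅x₀, y₀⁆ with hzdef
  have hz : z ≠ 0 := hy₀
  -- key rank-one lemma
  have key : ∀ a u w : L, ⁅a, u⁆ ≠ 0 → ∃ c : k, ⁅a, w⁆ = c • ⁅a, u⁆ := by
    intro a u w hau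
    have h1 : Submodule.span k {⁅a, u⁆} ≤ LinearMap.range (LieAlgebra.ad k L a) := by
      rw [Submodule.span_singleton_le_iff_mem]
      exact LinearMap.mem_range.mpr ⟨u, LieAlgebra.ad_apply ..⟩
    have h2 : finrank k (LinearMap.range (LieAlgebra.ad k L a)) ≤
        finrank k (Submodule.span k {⁅a, u⁆}) := by
      rw [finrank_span_singleton hau]
      exact hble a
    have h3 := Submodule.eq_of_le_of_finrank_le h1 h2
    have h4 : ⁅a, w⁆ ∈ Submodule.span k ({⁅a, u⁆} : Set L) := by
      rw [h3]
      exact LinearMap.mem_range.mpr ⟨w, LieAlgebra.ad_apply ..⟩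
    rw [Submodule.mem_span_singleton] at h4
    obtain ⟨c, hc⟩ := h4
    exact ⟨c, hc.symm⟩
  have hskewL : ∀ a b : L, ⁅a, b⁆ = -⁅b, a⁆ := fun a b => (lie_skew a b).symm
  have hyx' : ⁅y₀, x₀⁆ = -z := by rw [hskewL y₀ x₀, ← hzdef]
  have hyx : ⁅y₀, x₀⁆ ≠ 0 := by
    rw [hyx']
    simpa using hz
  -- brackets with x₀ resp. y₀ lie in the span of z
  have hx0w : ∀ w : L, ∃ c : k, ⁅x₀, w⁆ = c • z := fun w => key x₀ y₀ w hy₀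
  have hy0w : ∀ w : L, ∃ c : k, ⁅y₀, w⁆ = c • z := by
    intro w
    obtain ⟨c, hc⟩ := key y₀ x₀ w hyx
    refine ⟨-c, ?_⟩
    rw [hc, hyx', smul_neg, neg_smul]
  have bracket_span : ∀ a b : L, ∃ c : k, ⁅a, b⁆ = c • z := by
    have half : ∀ a b : L, ⁅a, x₀⁆ = 0 → ⁅a, y₀⁆ = 0 → ⁅b, x₀⁆ = 0 → ∃ c : k, ⁅a, b⁆ = c • z := by
      intro a b hax hay hbx
      have hxa : ⁅x₀ + a, y₀⁆ = z := by
        rw [add_lie, ← hzdef, hay, add_zero]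
      have hne : ⁅x₀ + a, y₀⁆ ≠ 0 := by rw [hxa]; exact hz
      obtain ⟨c, hc⟩ := key (x₀ + a) y₀ b hne
      rw [hxa] at hc
      rw [add_lie] at hc
      have hxb : ⁅x₀, b⁆ = 0 := by rw [hskewL x₀ b, hbx, neg_zero]
      rw [hxb, zero_add] at hc
      exact ⟨c, hc⟩
    intro a b
    by_cases hax : ⁅a, x₀⁆ = 0
    · by_cases hay : ⁅a, y₀⁆ = 0
      · by_cases hbx : ⁅b, x₀⁆ = 0
        · exact half a b hax hay hbx
        · -- ⁅b, x₀⁆ ≠ 0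
          obtain ⟨c₁, hc₁⟩ := hx0w b
          have hbx' : ⁅b, x₀⁆ = (-c₁) • z := by
            rw [hskewL b x₀, hc₁, neg_smul]
          obtain ⟨c₂, hc₂⟩ := key b x₀ a hbx
          refine ⟨-(c₂ * -c₁), ?_⟩
          rw [hskewL a b, hc₂, hbx', smul_smul, neg_smul]
      · -- ⁅a, y₀⁆ ≠ 0
        obtain ⟨c₁, hc₁⟩ := hy0w a
        have hay' : ⁅a, y₀⁆ = (-c₁) • z := by
          rw [hskewL a y₀, hc₁, neg_smul]
        obtain ⟨c₂, hc₂⟩ := key a y₀ b hay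
        refine ⟨c₂ * -c₁, ?_⟩
        rw [hc₂, hay', smul_smul]
    · -- ⁅a, x₀⁆ ≠ 0
      obtain ⟨c₁, hc₁⟩ := hx0w a
      have hax' : ⁅a, x₀⁆ = (-c₁) • z := by
        rw [hskewL a x₀, hc₁, neg_smul]
      obtain ⟨c₂, hc₂⟩ := key a x₀ b hax
      refine ⟨c₂ * -c₁, ?_⟩
      rw [hc₂, hax', smul_smul]
  -- z is central
  have hzc : ∀ w : L, ⁅w, z⁆ = 0 := by
    intro w
    obtain ⟨c, hc⟩ := bracket_span w z
    obtain ⟨n, hn⟩ := LieAlgebra.nilpotent_ad_of_nilpotent_algebra k L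
    have hpow : ∀ j : ℕ, ((LieAlgebra.ad k L w) ^ j) z = c ^ j • z := by
      intro j
      induction j with
      | zero => simp
      | succ j ihj =>
        rw [pow_succ, Module.End.mul_apply, LieAlgebra.ad_apply, hc, map_smul, ihj, smul_smul,
          ← pow_succ']
    have h0 : c ^ n • z = 0 := by
      rw [← hpow n, hn w]
      rfl
    have hcn : c ^ n = 0 := by
      rcases smul_eq_zero.mp h0 with h | h
      · exact h
      · exact absurd h hz
    have hc0 : c = 0 := IsNilpotent.eq_zero ⟨n, hcn⟩
    rw [hc, hc0, zero_smul]
  -- a linear functional with φ z = 1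
  have hli : LinearIndepOn k id ({z} : Set L) :=
    LinearIndepOn.singleton (v := id) hz
  let bb := Basis.extend hli
  have hzmem : z ∈ hli.extend (Set.subset_univ _) :=
    hli.subset_extend _ (Set.mem_singleton z)
  set φ : L →ₗ[k] k := bb.coord ⟨z, hzmem⟩ with hφ
  have hφz : φ z = 1 := by
    have hb : bb ⟨z, hzmem⟩ = z := Basis.extend_apply_self hli ⟨z, hzmem⟩
    have h2 : bb.repr z = bb.repr (bb ⟨z, hzmem⟩) := by rw [hb]
    rw [hφ, Basis.coord_apply, h2, Basis.repr_self]
    simp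
  -- the bilinear form
  set B : L →ₗ[k] L →ₗ[k] k := LinearMap.mk₂ k (fun a b => φ ⁅a, b⁆)
    (fun a a' b => by simp [add_lie])
    (fun c a b => by simp [smul_lie])
    (fun a b b' => by simp [lie_add])
    (fun c a b => by simp [lie_smul]) with hB
  have hBapp : ∀ a b : L, B a b = φ ⁅a, b⁆ := fun a b => rfl
  have hrel : ∀ a b : L, ⁅a, b⁆ = B a b • z := by
    intro a b
    obtain ⟨c, hc⟩ := bracket_span a b
    rw [hBapp, hc, map_smul, hφz, smul_eq_mul, mul_one]
  have halt : ∀ a : L, B a a = 0 := by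
    intro a
    rw [hBapp, lie_self, map_zero]
  have hzlie : ∀ w : L, ⁅z, w⁆ = 0 := by
    intro w
    rw [hskewL z w, hzc w, neg_zero]
  -- the derived ideal is contained in the span of z
  have hderZ : ∀ x : L, x ∈ derivedIdeal k L → x ∈ Submodule.span k ({z} : Set L) := by
    intro x hx
    rw [← LieSubmodule.mem_toSubmodule, LieSubmodule.lieIdeal_oper_eq_linear_span'] at hx
    have hsub : Submodule.span k
        { m : L | ∃ a ∈ (⊤ : LieIdeal k L), ∃ n ∈ (⊤ : LieIdeal k L), ⁅a, n⁆ = m } ≤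
        Submodule.span k ({z} : Set L) := by
      rw [Submodule.span_le]
      rintro y ⟨a, -, b, -, rfl⟩
      obtain ⟨c, hc⟩ := bracket_span a b
      rw [hc]
      exact Submodule.smul_mem _ _ (Submodule.mem_span_singleton_self z)
    exact hsub hx
  have hrad : ∀ v : L, (∀ w, B v w = 0) ↔ v ∈ Submodule.span k ({z} : Set L) := by
    intro v
    constructor
    · intro h
      have hvc : v ∈ LieAlgebra.center k L := by
        rw [LieModule.mem_maxTrivSubmodule]
        intro x
        rw [hskewL x v, hrel v x, h x, zero_smul, neg_zero]
      exact hderZ v (hstem hvc)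
    · intro h w
      rw [Submodule.mem_span_singleton] at h
      obtain ⟨c, hc⟩ := h
      rw [hBapp, ← hc, smul_lie, hzlie, smul_zero, map_zero]
  obtain ⟨m, b, hbz, hb1, hb2, hb3⟩ :=
    symp_aux k (finrank k L) L rfl B halt z hz hrad
  have hm : 1 ≤ m := by
    rcases Nat.eq_zero_or_pos m with hm0 | hm
    · exfalso
      subst hm0
      have hall : ∀ x : L, x ∈ Submodule.span k ({z} : Set L) := by
        intro x
        have hx : x ∈ Submodule.span k (Set.range b) := by
          rw [Basis.span_eq]; trivial
        refine Submodule.span_le.mpr ?_ hx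
        rintro _ ⟨t, rfl⟩
        rcases t with i | i | u
        · exact i.elim0
        · exact i.elim0
        · cases u
          rw [hbz]
          exact Submodule.subset_span (Set.mem_singleton z)
      obtain ⟨c, hcx⟩ := Submodule.mem_span_singleton.mp (hall x₀)
      obtain ⟨d, hdy⟩ := Submodule.mem_span_singleton.mp (hall y₀)
      apply hz
      rw [hzdef, ← hcx, ← hdy, smul_lie, lie_smul, lie_self, smul_zero, smul_zero]
    · exact hm
  refine ⟨m, hm, b, ?_, ?_, ?_, ?_⟩
  · intro i j
    rw [hrel, hb1 i j, ite_smul, one_smul, zero_smul, hbz]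
  · intro i j
    rw [hrel, hb2 i j, zero_smul]
  · intro i j
    rw [hrel, hb3 i j, zero_smul]
  · intro v
    rw [hbz]
    exact hzlie v
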